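/- arXiv:1803.00936 — 2 statements merged into one kernel-verified Lean document; each statement's English description precedes it below -/
import Mathlib

section
/- Assume φ: A → A is surjective. Let (N, α_N) →^j (K, α_K) →^f (L, α_L) be a central extension of hom-Lie-Rinehart algebras over (A, φ) with (K, α_K) α-perfect, and set P = uce^φ_A(f)(Ker(u_K)) ⊆ uce^φ_A L. Then an automorphism h of (L, α_L) lifts to an automorphism h̃ of (K, α_K) with h ∘ f = f ∘ h̃ (and such a lift is unique) if and only if uce^φ_A(h)(P) = P; moreover in that case h̃(Ker(f)) = Ker(f), and the assignment h ↦ h̃ is a group isomorphism from {h ∈ Aut(L, α_L) : uce^φ_A(h)(P) = P} onto {g ∈ Aut(K, α_K) : g(Ker(f)) = Ker(f)}. -/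
open TensorProduct Function Set

/-- A hom-Lie-Rinehart algebra structure over `(A, φ)` on the `A`-module `L`. -/
structure HLR (R A : Type) [CommRing R] [CommRing A] [Algebra R A]
    (φ : A →ₐ[R] A) (L : Type) [AddCommGroup L] [Module R L]
    [Module A L] [IsScalarTower R A L] : Type where
  bracket : L → L → L
  add_left : ∀ x y z, bracket (x + y) z = bracket x z + bracket y z
  add_right : ∀ x y z, bracket x (y + z) = bracket x y + bracket x z
  smul_left : ∀ (r : R) (x y : L), bracket (r • x) y = r • bracket x y
  smul_right : ∀ (r : R) (x y : L), bracket x (r • y) = r • bracket x y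
  skew : ∀ x y, bracket x y = - bracket y x
  alpha : L → L
  alpha_add : ∀ x y, alpha (x + y) = alpha x + alpha y
  alpha_smulR : ∀ (r : R) (x : L), alpha (r • x) = r • alpha x
  rho : L → A → A
  rho_add_left : ∀ x y a, rho (x + y) a = rho x a + rho y a
  rho_smulR_left : ∀ (r : R) (x : L) (a : A), rho (r • x) a = r • rho x a
  rho_add_right : ∀ (x : L) (a b : A), rho x (a + b) = rho x a + rho x b
  rho_smulR_right : ∀ (x : L) (r : R) (a : A), rho x (r • a) = r • rho x a
  rho_deriv : ∀ (x : L) (a b : A), rho x (a * b) = φ a * rho x b + φ b * rho x a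
  alpha_bracket : ∀ x y, alpha (bracket x y) = bracket (alpha x) (alpha y)
  hom_jacobi : ∀ x y z, bracket (alpha x) (bracket y z)
      + bracket (alpha y) (bracket z x) + bracket (alpha z) (bracket x y) = 0
  alpha_smulA : ∀ (a : A) (x : L), alpha (a • x) = φ a • alpha x
  rho_alpha : ∀ (x : L) (a : A), rho (alpha x) (φ a) = φ (rho x a)
  rho_bracket : ∀ (x y : L) (a : A), rho (bracket x y) (φ a)
      = rho (alpha x) (rho y a) - rho (alpha y) (rho x a)
  rho_smulA : ∀ (a : A) (x : L) (b : A), rho (a • x) b = φ a * rho x b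
  leibniz : ∀ (x : L) (a : A) (y : L),
      bracket x (a • y) = φ a • bracket x y + rho x a • alpha y

section Defs

variable {R A : Type} [CommRing R] [CommRing A] [Algebra R A] {φ : A →ₐ[R] A}

/-- Homomorphism of hom-Lie-Rinehart algebras over `(A, φ)`: an `A`-linear map
preserving brackets, the twist maps and the anchors. -/
def IsHLRHom {K L : Type}
    [AddCommGroup K] [Module R K] [Module A K] [IsScalarTower R A K]
    [AddCommGroup L] [Module R L] [Module A L] [IsScalarTower R A L]
    (SK : HLR R A φ K) (SL : HLR R A φ L) (f : K → L) : Prop :=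
  (∀ x y, f (x + y) = f x + f y) ∧
  (∀ (a : A) (x : K), f (a • x) = a • f x) ∧
  (∀ x y, f (SK.bracket x y) = SL.bracket (f x) (f y)) ∧
  (∀ x, f (SK.alpha x) = SL.alpha (f x)) ∧
  (∀ (x : K) (a : A), SL.rho (f x) a = SK.rho x a)

/-- The center `Z_A(L)` of a hom-Lie-Rinehart algebra. -/
def HLR.center {L : Type}
    [AddCommGroup L] [Module R L] [Module A L] [IsScalarTower R A L]
    (S : HLR R A φ L) : Set L :=
  {x | ∀ (a : A) (z : L),
    S.bracket (a • x) z = 0 ∧ S.bracket (a • S.alpha x) z = 0 ∧ S.rho x a = 0}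

/-- `(M, i) → (K, σ)` is a central extension of `L`. -/
def IsCentralExt {M K L : Type}
    [AddCommGroup M] [Module R M] [Module A M] [IsScalarTower R A M]
    [AddCommGroup K] [Module R K] [Module A K] [IsScalarTower R A K]
    [AddCommGroup L] [Module R L] [Module A L] [IsScalarTower R A L]
    (SM : HLR R A φ M) (SK : HLR R A φ K) (SL : HLR R A φ L)
    (i : M → K) (σ : K → L) : Prop :=
  IsHLRHom SM SK i ∧ IsHLRHom SK SL σ ∧ Function.Injective i ∧
  Function.Surjective σ ∧ Set.range i = {k | σ k = 0} ∧
  {k | σ k = 0} ⊆ SK.center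

/-- `(M, i) → (K, σ)` is an `α`-central extension of `L`. -/
def IsAlphaCentralExt {M K L : Type}
    [AddCommGroup M] [Module R M] [Module A M] [IsScalarTower R A M]
    [AddCommGroup K] [Module R K] [Module A K] [IsScalarTower R A K]
    [AddCommGroup L] [Module R L] [Module A L] [IsScalarTower R A L]
    (SM : HLR R A φ M) (SK : HLR R A φ K) (SL : HLR R A φ L)
    (i : M → K) (σ : K → L) : Prop :=
  IsHLRHom SM SK i ∧ IsHLRHom SK SL σ ∧ Function.Injective i ∧
  Function.Surjective σ ∧ Set.range i = {k | σ k = 0} ∧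
  (∀ m : M, i (SM.alpha m) ∈ SK.center)

/-- A hom-Lie-Rinehart algebra is perfect if `L = {L, L}`, the `A`-submodule
generated by all brackets. -/
def HLR.IsPerfect {L : Type}
    [AddCommGroup L] [Module R L] [Module A L] [IsScalarTower R A L]
    (S : HLR R A φ L) : Prop :=
  Submodule.span A {z : L | ∃ x y, z = S.bracket x y} = ⊤

/-- A hom-Lie-Rinehart algebra is `α`-perfect if `L = {α_L(L), α_L(L)}`. -/
def HLR.IsAlphaPerfect {L : Type}
    [AddCommGroup L] [Module R L] [Module A L] [IsScalarTower R A L]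
    (S : HLR R A φ L) : Prop :=
  Submodule.span A {z : L | ∃ x y, z = S.bracket (S.alpha x) (S.alpha y)} = ⊤

/-- Universal central extension. -/
def IsUniversalCentralExt {M K L : Type}
    [AddCommGroup M] [Module R M] [Module A M] [IsScalarTower R A M]
    [AddCommGroup K] [Module R K] [Module A K] [IsScalarTower R A K]
    [AddCommGroup L] [Module R L] [Module A L] [IsScalarTower R A L]
    (SM : HLR R A φ M) (SK : HLR R A φ K) (SL : HLR R A φ L)
    (i : M → K) (σ : K → L) : Prop :=
  IsCentralExt SM SK SL i σ ∧
  ∀ (M' L' : Type)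
    [AddCommGroup M'] [Module R M'] [Module A M'] [IsScalarTower R A M']
    [AddCommGroup L'] [Module R L'] [Module A L'] [IsScalarTower R A L']
    (SM' : HLR R A φ M') (SL' : HLR R A φ L') (j : M' → L') (τ : L' → L),
    IsCentralExt SM' SL' SL j τ →
    ∃! h : K → L', IsHLRHom SK SL' h ∧ ∀ x, τ (h x) = σ x

/-- Universal `α`-central extension. -/
def IsUniversalAlphaCentralExt {M K L : Type}
    [AddCommGroup M] [Module R M] [Module A M] [IsScalarTower R A M]
    [AddCommGroup K] [Module R K] [Module A K] [IsScalarTower R A K]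
    [AddCommGroup L] [Module R L] [Module A L] [IsScalarTower R A L]
    (SM : HLR R A φ M) (SK : HLR R A φ K) (SL : HLR R A φ L)
    (i : M → K) (σ : K → L) : Prop :=
  IsCentralExt SM SK SL i σ ∧
  ∀ (M' L' : Type)
    [AddCommGroup M'] [Module R M'] [Module A M'] [IsScalarTower R A M']
    [AddCommGroup L'] [Module R L'] [Module A L'] [IsScalarTower R A L']
    (SM' : HLR R A φ M') (SL' : HLR R A φ L') (j : M' → L') (τ : L' → L),
    IsAlphaCentralExt SM' SL' SL j τ →
    ∃! h : K → L', IsHLRHom SK SL' h ∧ ∀ x, τ (h x) = σ x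

end Defs

section UceDefs

variable {R A : Type} [CommRing R] [CommRing A] [Algebra R A] (φ : A →ₐ[R] A)
variable {L : Type} [AddCommGroup L] [Module R L] [Module A L] [IsScalarTower R A L]

/-- The `A`-submodule `M^φ_A L` of `A ⊗ L ⊗ L` of defining relations of `uce^φ_A L`. -/
def uceRel (S : HLR R A φ L) : Submodule A (A ⊗[R] (L ⊗[R] L)) :=
  Submodule.span A
    ({t | ∃ (a : A) (x : L), t = a ⊗ₜ[R] (x ⊗ₜ[R] x)} ∪
     {t | ∃ (a : A) (x y : L), t = a ⊗ₜ[R] (x ⊗ₜ[R] y) + a ⊗ₜ[R] (y ⊗ₜ[R] x)} ∪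
     {t | ∃ (a : A) (x y z : L), t =
        a ⊗ₜ[R] (S.alpha x ⊗ₜ[R] S.bracket y z)
          + a ⊗ₜ[R] (S.alpha y ⊗ₜ[R] S.bracket z x)
          + a ⊗ₜ[R] (S.alpha z ⊗ₜ[R] S.bracket x y)} ∪
     {t | ∃ (a : A) (x y x' y' : L), t =
        φ a ⊗ₜ[R] (S.bracket x y ⊗ₜ[R] S.bracket x' y')
          + S.rho (S.bracket x y) a ⊗ₜ[R] (S.alpha x' ⊗ₜ[R] S.alpha y')
          - (1 : A) ⊗ₜ[R] (S.bracket x y ⊗ₜ[R] (a • S.bracket x' y'))})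

/-- The underlying `A`-module of `uce^φ_A L`. -/
abbrev UCE (S : HLR R A φ L) : Type := (A ⊗[R] (L ⊗[R] L)) ⧸ uceRel φ S

/-- The coset `(a, x, y)` in `uce^φ_A L`. -/
noncomputable def uceMk (S : HLR R A φ L) (a : A) (x y : L) : UCE φ S :=
  Submodule.Quotient.mk (a ⊗ₜ[R] (x ⊗ₜ[R] y))

/-- `U` is the hom-Lie-Rinehart structure of `uce^φ_A L`: its bracket, twist map and anchor
are given by the defining formulas on cosets. -/
def IsUceStructure (S : HLR R A φ L) (U : HLR R A φ (UCE φ S)) : Prop :=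
  (∀ (a₁ a₂ : A) (x₁ y₁ x₂ y₂ : L),
    U.bracket (uceMk φ S a₁ x₁ y₁) (uceMk φ S a₂ x₂ y₂) =
      uceMk φ S (φ (a₁ * a₂)) (S.bracket x₁ y₁) (S.bracket x₂ y₂)
      + uceMk φ S (φ a₁ * S.rho (S.bracket x₁ y₁) a₂) (S.alpha x₂) (S.alpha y₂)
      - uceMk φ S (φ a₂ * S.rho (S.bracket x₂ y₂) a₁) (S.alpha x₁) (S.alpha y₁)) ∧
  (∀ (a : A) (x y : L),
    U.alpha (uceMk φ S a x y) = uceMk φ S (φ a) (S.alpha x) (S.alpha y)) ∧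
  (∀ (a b : A) (x y : L),
    U.rho (uceMk φ S a x y) b = φ a * S.rho (S.bracket x y) b)

/-- `u` is the canonical map `u_L : uce^φ_A L → L`, `(a,x,y) ↦ a • [x,y]`. -/
def IsUceMap (S : HLR R A φ L) (u : UCE φ S → L) : Prop :=
  (∀ ξ η, u (ξ + η) = u ξ + u η) ∧
  (∀ (a : A) (ξ : UCE φ S), u (a • ξ) = a • u ξ) ∧
  (∀ (a : A) (x y : L), u (uceMk φ S a x y) = a • S.bracket x y)

end UceDefs

section MoreDefs

variable {R A : Type} [CommRing R] [CommRing A] [Algebra R A] (φ : A →ₐ[R] A)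

/-- `F` is the homomorphism `uce^φ_A(f)` induced by `f` on universal central extensions. -/
def IsUceFunctorMap {K L : Type}
    [AddCommGroup K] [Module R K] [Module A K] [IsScalarTower R A K]
    [AddCommGroup L] [Module R L] [Module A L] [IsScalarTower R A L]
    (SK : HLR R A φ K) (SL : HLR R A φ L)
    (UK : HLR R A φ (UCE φ SK)) (UL : HLR R A φ (UCE φ SL))
    (f : K → L) (F : UCE φ SK → UCE φ SL) : Prop :=
  IsHLRHom UK UL F ∧
  ∀ (a : A) (x y : K), F (uceMk φ SK a x y) = uceMk φ SL a (f x) (f y)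

/-- `D` is an `α`-derivation of `(L, α_L)` with symbol `σD`. -/
def IsAlphaDeriv {L : Type}
    [AddCommGroup L] [Module R L] [Module A L] [IsScalarTower R A L]
    (S : HLR R A φ L) (D : L → L) (σD : A → A) : Prop :=
  (∀ x y, D (x + y) = D x + D y) ∧
  (∀ (r : R) (x : L), D (r • x) = r • D x) ∧
  (∀ a b, σD (a + b) = σD a + σD b) ∧
  (∀ (r : R) (a : A), σD (r • a) = r • σD a) ∧
  (∀ a b, σD (a * b) = φ a * σD b + φ b * σD a) ∧
  (∀ x, D (S.alpha x) = S.alpha (D x)) ∧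
  (∀ x y, D (S.bracket x y) = S.bracket (D x) (S.alpha y) + S.bracket (S.alpha x) (D y)) ∧
  (∀ a, σD (φ a) = φ (σD a)) ∧
  (∀ (a : A) (x : L), D (a • x) = φ a • D x + σD a • S.alpha x) ∧
  (∀ (x : L) (a : A), σD (S.rho x a) = S.rho (S.alpha x) (σD a) + S.rho (D x) (φ a))

/-- A quasi hom-action of `(L, α_L)` on `(M, α_M)`. -/
def IsQuasiHomAction {L M : Type}
    [AddCommGroup L] [Module R L] [Module A L] [IsScalarTower R A L]
    [AddCommGroup M] [Module R M] [Module A M] [IsScalarTower R A M]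
    (SL : HLR R A φ L) (SM : HLR R A φ M) (act : L → M → M) : Prop :=
  (∀ (x : L) (a : A) (m : M),
      act x (a • m) = φ a • act x m + SL.rho x a • SM.alpha m) ∧
  (∀ (x y : L) (m : M),
      act (SL.bracket x y) (SM.alpha m)
        = act (SL.alpha x) (act y m) - act (SL.alpha y) (act x m)) ∧
  (∀ (x : L) (m n : M),
      act (SL.alpha x) (SM.bracket m n)
        = SM.bracket (act x m) (SM.alpha n) + SM.bracket (SM.alpha m) (act x n)) ∧
  (∀ (x : L) (m : M) (a : A),
      SM.rho (act x m) (φ a)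
        = SL.rho (SL.alpha x) (SM.rho m a) - SM.rho (SM.alpha m) (SL.rho x a)) ∧
  (∀ (x : L) (m : M), SM.alpha (act x m) = act (SL.alpha x) (SM.alpha m))

/-- Compatibility of two quasi hom-actions on each other. -/
def AreCompatibleActions {L M : Type}
    [AddCommGroup L] [Module R L] [Module A L] [IsScalarTower R A L]
    [AddCommGroup M] [Module R M] [Module A M] [IsScalarTower R A M]
    (SL : HLR R A φ L) (SM : HLR R A φ M)
    (actLM : L → M → M) (actML : M → L → L) : Prop :=
  (∀ (x : L) (m : M) (a : A), SM.rho (actLM x m) a = - SL.rho (actML m x) a) ∧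
  (∀ (m : M) (x : L) (n : M), actLM (actML m x) n = SM.bracket n (actLM x m)) ∧
  (∀ (x : L) (m : M) (y : L), actML (actLM x m) y = SL.bracket y (actML m x))

end MoreDefs

section StarDefs

variable {R A : Type} [CommRing R] [CommRing A] [Algebra R A] (φ : A →ₐ[R] A)
variable {L M : Type}
  [AddCommGroup L] [Module R L] [Module A L] [IsScalarTower R A L]
  [AddCommGroup M] [Module R M] [Module A M] [IsScalarTower R A M]

/-- The `A`-submodule of defining relations of the non-abelian tensor product `L ∗ M`,
inside the free `A`-module on the symbols `x ∗ m`. -/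
noncomputable def starRel (SL : HLR R A φ L) (SM : HLR R A φ M)
    (actLM : L → M → M) (actML : M → L → L) : Submodule A ((L × M) →₀ A) :=
  Submodule.span A
    ({t | ∃ (x y : L) (m : M), t =
        Finsupp.single (x + y, m) (1 : A) - Finsupp.single (x, m) 1
          - Finsupp.single (y, m) 1} ∪
     {t | ∃ (r : R) (x : L) (m : M), t =
        Finsupp.single (r • x, m) (1 : A) - r • Finsupp.single (x, m) (1 : A)} ∪
     {t | ∃ (x : L) (m n : M), t =
        Finsupp.single (x, m + n) (1 : A) - Finsupp.single (x, m) 1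
          - Finsupp.single (x, n) 1} ∪
     {t | ∃ (r : R) (x : L) (m : M), t =
        Finsupp.single (x, r • m) (1 : A) - r • Finsupp.single (x, m) (1 : A)} ∪
     {t | ∃ (x y : L) (m : M), t =
        Finsupp.single (SL.bracket x y, SM.alpha m) (1 : A)
          - Finsupp.single (SL.alpha x, actLM y m) 1
          + Finsupp.single (SL.alpha y, actLM x m) 1} ∪
     {t | ∃ (x : L) (m n : M), t =
        Finsupp.single (SL.alpha x, SM.bracket m n) (1 : A)
          - Finsupp.single (actML n x, SM.alpha m) 1
          + Finsupp.single (actML m x, SM.alpha n) 1} ∪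
     {t | ∃ (a b : A) (x y : L) (m n : M), t =
        Finsupp.single (a • actML m x, b • actLM y n) (1 : A)
          + Finsupp.single (b • actML n y, a • actLM x m) 1} ∪
     {t | ∃ (a b : A) (x y : L) (m n : M), t =
        Finsupp.single (a • actML m x, b • actLM y n) (1 : A)
          - φ (a * b) • Finsupp.single (actML m x, actLM y n) (1 : A)
          + (φ a * SM.rho (actLM x m) b) • Finsupp.single (SL.alpha y, SM.alpha n) (1 : A)
          - (φ b * SM.rho (actLM y n) a) • Finsupp.single (SL.alpha x, SM.alpha m) (1 : A)})

/-- The underlying `A`-module of the non-abelian tensor product `L ∗ M`. -/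
abbrev StarMod (SL : HLR R A φ L) (SM : HLR R A φ M)
    (actLM : L → M → M) (actML : M → L → L) : Type :=
  ((L × M) →₀ A) ⧸ starRel φ SL SM actLM actML

/-- The generator `x ∗ m` of `L ∗ M`. -/
noncomputable def starMk (SL : HLR R A φ L) (SM : HLR R A φ M)
    (actLM : L → M → M) (actML : M → L → L) (x : L) (m : M) :
    StarMod φ SL SM actLM actML :=
  Submodule.Quotient.mk (Finsupp.single (x, m) (1 : A))

/-- `U` is the hom-Lie-Rinehart structure of the non-abelian tensor product `L ∗ M`. -/
def IsStarStructure (SL : HLR R A φ L) (SM : HLR R A φ M)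
    (actLM : L → M → M) (actML : M → L → L)
    (U : HLR R A φ (StarMod φ SL SM actLM actML)) : Prop :=
  (∀ (x : L) (m : M),
      U.alpha (starMk φ SL SM actLM actML x m)
        = starMk φ SL SM actLM actML (SL.alpha x) (SM.alpha m)) ∧
  (∀ (a b : A) (x y : L) (m n : M),
      U.bracket (a • starMk φ SL SM actLM actML x m)
          (b • starMk φ SL SM actLM actML y n)
        = - starMk φ SL SM actLM actML (a • actML m x) (b • actLM y n)) ∧
  (∀ (x : L) (m : M) (a : A),
      U.rho (starMk φ SL SM actLM actML x m) a = SM.rho (actLM x m) a)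

/-- A hom-Lie-Rinehart pairing of `(L, α_L)` and `(M, α_M)` into `(N, α_N)`. -/
def IsHLRPairing {N : Type}
    [AddCommGroup N] [Module R N] [Module A N] [IsScalarTower R A N]
    (SL : HLR R A φ L) (SM : HLR R A φ M) (SN : HLR R A φ N)
    (actLM : L → M → M) (actML : M → L → L) (f : L → M → N) : Prop :=
  (∀ (x y : L) (m : M), f (x + y) m = f x m + f y m) ∧
  (∀ (r : R) (x : L) (m : M), f (r • x) m = r • f x m) ∧
  (∀ (x : L) (m n : M), f x (m + n) = f x m + f x n) ∧
  (∀ (r : R) (x : L) (m : M), f x (r • m) = r • f x m) ∧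
  (∀ (x : L) (m : M) (a : A), SN.rho (f x m) a = SM.rho (actLM x m) a) ∧
  (∀ (x y : L) (m : M),
      f (SL.bracket x y) (SM.alpha m)
        = f (SL.alpha x) (actLM y m) - f (SL.alpha y) (actLM x m)) ∧
  (∀ (x : L) (m n : M),
      f (SL.alpha x) (SM.bracket m n)
        = f (actML n x) (SM.alpha m) - f (actML m x) (SM.alpha n)) ∧
  (∀ (x : L) (m : M), f (SL.alpha x) (SM.alpha m) = SN.alpha (f x m)) ∧
  (∀ (a b : A) (x y : L) (m n : M),
      f (a • actML m x) (b • actLM y n)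
        = - (φ (a * b) • SN.bracket (f x m) (f y n))
          - (φ a * SN.rho (f x m) b) • SN.alpha (f y n)
          + (φ b * SN.rho (f y n) a) • SN.alpha (f x m))

end StarDefs


section AuxProof
set_option linter.unusedSectionVars false

variable {R A : Type} [CommRing R] [CommRing A] [Algebra R A] {φ : A →ₐ[R] A}

lemma addhom_zero {β γ : Type} [AddCommGroup β] [AddCommGroup γ] {g : β → γ}
    (h : ∀ x y, g (x + y) = g x + g y) : g 0 = 0 := by
  have h0 := h 0 0
  rw [add_zero] at h0
  exact (left_eq_add.mp h0)

lemma addhom_sub {β γ : Type} [AddCommGroup β] [AddCommGroup γ] {g : β → γ}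
    (h : ∀ x y, g (x + y) = g x + g y) (x y : β) : g (x - y) = g x - g y := by
  have h0 := h (x - y) y
  rw [sub_add_cancel] at h0
  exact eq_sub_of_add_eq h0.symm

namespace HLR

variable {L : Type} [AddCommGroup L] [Module R L] [Module A L] [IsScalarTower R A L]

lemma bracket_zero_left (S : HLR R A φ L) (z : L) : S.bracket 0 z = 0 := by
  have h0 := S.add_left 0 0 z
  rw [add_zero] at h0
  exact (left_eq_add.mp h0)

lemma bracket_zero_right (S : HLR R A φ L) (z : L) : S.bracket z 0 = 0 := by
  have h0 := S.add_right z 0 0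
  rw [add_zero] at h0
  exact (left_eq_add.mp h0)

lemma rho_zero_left (S : HLR R A φ L) (a : A) : S.rho 0 a = 0 := by
  have h0 := S.rho_add_left 0 0 a
  rw [add_zero] at h0
  exact (left_eq_add.mp h0)

lemma alpha_zero (S : HLR R A φ L) : S.alpha 0 = 0 := addhom_zero S.alpha_add

lemma bracket_smul_smul (S : HLR R A φ L) (a b : A) (u v : L) :
    S.bracket (a • u) (b • v)
      = (φ a * φ b) • S.bracket u v + (φ a * S.rho u b) • S.alpha v
        - (φ b * S.rho v a) • S.alpha u := by
  have h1 : S.bracket (a • u) v = φ a • S.bracket u v - S.rho v a • S.alpha u := by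
    rw [S.skew (a • u) v, S.leibniz v a u, S.skew v u]
    module
  rw [S.leibniz (a • u) b v, S.rho_smulA, h1]
  module

end HLR

namespace IsHLRHom

variable {K L M : Type}
  [AddCommGroup K] [Module R K] [Module A K] [IsScalarTower R A K]
  [AddCommGroup L] [Module R L] [Module A L] [IsScalarTower R A L]
  [AddCommGroup M] [Module R M] [Module A M] [IsScalarTower R A M]
variable {SK : HLR R A φ K} {SL : HLR R A φ L} {SM : HLR R A φ M}

lemma map_zero' {g : K → L} (hg : IsHLRHom SK SL g) : g 0 = 0 := addhom_zero hg.1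

lemma map_sub' {g : K → L} (hg : IsHLRHom SK SL g) (x y : K) :
    g (x - y) = g x - g y := addhom_sub hg.1 x y

lemma map_smulR {g : K → L} (hg : IsHLRHom SK SL g) (r : R) (x : K) :
    g (r • x) = r • g x := by
  rw [← algebraMap_smul A r x, hg.2.1, algebraMap_smul]

lemma comp {g : K → L} {h : L → M} (hg : IsHLRHom SK SL g) (hh : IsHLRHom SL SM h) :
    IsHLRHom SK SM (h ∘ g) := by
  obtain ⟨g1, g2, g3, g4, g5⟩ := hg
  obtain ⟨h1, h2, h3, h4, h5⟩ := hh
  exact ⟨fun x y => by simp [g1, h1], fun a x => by simp [g2, h2],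
    fun x y => by simp [g3, h3], fun x => by simp [g4, h4],
    fun x a => by simp only [Function.comp_apply, h5, g5]⟩

lemma inverse {g : K → L} (hg : IsHLRHom SK SL g) (hb : Function.Bijective g) :
    IsHLRHom SL SK (Function.invFun g) := by
  have hinj := hb.1
  have hri : ∀ y, g (Function.invFun g y) = y := Function.rightInverse_invFun hb.2
  obtain ⟨g1, g2, g3, g4, g5⟩ := hg
  refine ⟨?_, ?_, ?_, ?_, ?_⟩
  · intro x y; apply hinj; rw [hri, g1, hri, hri]
  · intro a x; apply hinj; rw [hri, g2, hri]
  · intro x y; apply hinj; rw [hri, g3, hri, hri]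
  · intro x; apply hinj; rw [hri, g4, hri]
  · intro x a; rw [← g5 (Function.invFun g x) a, hri]

end IsHLRHom

section Central

variable {K L : Type}
  [AddCommGroup K] [Module R K] [Module A K] [IsScalarTower R A K]
  [AddCommGroup L] [Module R L] [Module A L] [IsScalarTower R A L]
variable {SK : HLR R A φ K} {SL : HLR R A φ L} {f : K → L}

lemma central_bracket_left (hcent : {k : K | f k = 0} ⊆ SK.center) {c : K}
    (hc : f c = 0) (z : K) : SK.bracket c z = 0 := by
  have h0 := (hcent hc 1 z).1
  rwa [one_smul] at h0

lemma central_bracket_right (hcent : {k : K | f k = 0} ⊆ SK.center) {c : K}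
    (hc : f c = 0) (z : K) : SK.bracket z c = 0 := by
  rw [SK.skew, central_bracket_left hcent hc, neg_zero]

lemma bracket_congr (hf : IsHLRHom SK SL f) (hcent : {k : K | f k = 0} ⊆ SK.center)
    {u u' v v' : K} (h1 : f u = f u') (h2 : f v = f v') :
    SK.bracket u v = SK.bracket u' v' := by
  have e1 : SK.bracket u v = SK.bracket u' v := by
    have hc : f (u - u') = 0 := by rw [hf.map_sub', h1, sub_self]
    have h0 := SK.add_left (u - u') u' v
    rwa [sub_add_cancel, central_bracket_left hcent hc, zero_add] at h0
  have e2 : SK.bracket u' v = SK.bracket u' v' := by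
    have hc : f (v - v') = 0 := by rw [hf.map_sub', h2, sub_self]
    have h0 := SK.add_right u' (v - v') v'
    rwa [sub_add_cancel, central_bracket_right hcent hc, zero_add] at h0
  rw [e1, e2]

end Central


section UceAux

variable {L : Type} [AddCommGroup L] [Module R L] [Module A L] [IsScalarTower R A L]

lemma uceMk_smul (S : HLR R A φ L) (b a : A) (x y : L) :
    b • uceMk φ S a x y = uceMk φ S (b * a) x y := by
  rw [uceMk, uceMk, ← Submodule.Quotient.mk_smul, smul_tmul', smul_eq_mul]

lemma uce_induction (S : HLR R A φ L) (p : UCE φ S → Prop) (h0 : p 0)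
    (hmk : ∀ a x y, p (uceMk φ S a x y))
    (hadd : ∀ ξ η, p ξ → p η → p (ξ + η)) : ∀ ξ, p ξ := by
  intro ξ
  obtain ⟨t, rfl⟩ := Submodule.Quotient.mk_surjective _ ξ
  induction t using TensorProduct.induction_on with
  | zero => simpa using h0
  | tmul a m =>
    induction m using TensorProduct.induction_on with
    | zero => rw [tmul_zero]; simpa using h0
    | tmul x y => exact hmk a x y
    | add m n hm hn => rw [tmul_add, Submodule.Quotient.mk_add]; exact hadd _ _ hm hn
  | add t u ht hu => rw [Submodule.Quotient.mk_add]; exact hadd _ _ ht hu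

lemma uce_fun_ext (S : HLR R A φ L) {γ : Type} [AddCommGroup γ] {g₁ g₂ : UCE φ S → γ}
    (h₁ : ∀ ξ η, g₁ (ξ + η) = g₁ ξ + g₁ η) (h₂ : ∀ ξ η, g₂ (ξ + η) = g₂ ξ + g₂ η)
    (hmk : ∀ a x y, g₁ (uceMk φ S a x y) = g₂ (uceMk φ S a x y)) : ∀ ξ, g₁ ξ = g₂ ξ := by
  have h0 : g₁ (0 : UCE φ S) = g₂ 0 := by rw [addhom_zero h₁, addhom_zero h₂]
  have hadd : ∀ ξ η : UCE φ S, g₁ ξ = g₂ ξ → g₁ η = g₂ η → g₁ (ξ + η) = g₂ (ξ + η) := by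
    intro ξ η hξ hη
    rw [h₁, h₂, hξ, hη]
  exact uce_induction S (fun ξ => g₁ ξ = g₂ ξ) h0 hmk hadd

variable {X Y : Type}
  [AddCommGroup X] [Module R X] [Module A X] [IsScalarTower R A X]
  [AddCommGroup Y] [Module R Y] [Module A Y] [IsScalarTower R A Y]
variable {SX : HLR R A φ X} {SY : HLR R A φ Y}

noncomputable def homRLinear {g : X → Y} (hg : IsHLRHom SX SY g) : X →ₗ[R] Y where
  toFun := g
  map_add' := hg.1
  map_smul' := fun r x => by simp only [RingHom.id_apply]; exact hg.map_smulR r x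

noncomputable def uceTensorMap {g : X → Y} (hg : IsHLRHom SX SY g) :
    (A ⊗[R] (X ⊗[R] X)) →ₗ[A] UCE φ SY :=
  LinearMap.liftBaseChange A
    ((((uceRel φ SY).mkQ.restrictScalars R).comp
      ((TensorProduct.mk R A (Y ⊗[R] Y)) 1)).comp
        (TensorProduct.map (homRLinear hg) (homRLinear hg)))

lemma uceTensorMap_tmul {g : X → Y} (hg : IsHLRHom SX SY g) (a : A) (x y : X) :
    uceTensorMap hg (a ⊗ₜ[R] (x ⊗ₜ[R] y)) = uceMk φ SY a (g x) (g y) := by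
  rw [uceTensorMap, LinearMap.liftBaseChange_tmul]
  simp only [LinearMap.comp_apply, TensorProduct.map_tmul, TensorProduct.mk_apply,
    LinearMap.restrictScalars_apply, Submodule.mkQ_apply]
  rw [uceMk, ← Submodule.Quotient.mk_smul, smul_tmul', smul_eq_mul, mul_one]
  rfl

lemma uceRel_le_ker {g : X → Y} (hg : IsHLRHom SX SY g) :
    uceRel φ SX ≤ LinearMap.ker (uceTensorMap hg) := by
  rw [uceRel, Submodule.span_le]
  rintro t ht
  simp only [Set.mem_union, Set.mem_setOf_eq] at ht
  rcases ht with (((⟨a, x, rfl⟩ | ⟨a, x, y, rfl⟩) | ⟨a, x, y, z, rfl⟩) | ⟨a, x, y, x', y', rfl⟩)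
  · simp only [SetLike.mem_coe, LinearMap.mem_ker, uceTensorMap_tmul, uceMk]
    rw [Submodule.Quotient.mk_eq_zero]
    exact Submodule.subset_span (Or.inl (Or.inl (Or.inl ⟨a, g x, rfl⟩)))
  · simp only [SetLike.mem_coe, LinearMap.mem_ker, map_add, uceTensorMap_tmul, uceMk]
    rw [← Submodule.Quotient.mk_add, Submodule.Quotient.mk_eq_zero]
    exact Submodule.subset_span (Or.inl (Or.inl (Or.inr ⟨a, g x, g y, rfl⟩)))
  · simp only [SetLike.mem_coe, LinearMap.mem_ker, map_add, uceTensorMap_tmul, uceMk,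
      hg.2.2.1, hg.2.2.2.1]
    rw [← Submodule.Quotient.mk_add, ← Submodule.Quotient.mk_add,
      Submodule.Quotient.mk_eq_zero]
    exact Submodule.subset_span (Or.inl (Or.inr ⟨a, g x, g y, g z, rfl⟩))
  · simp only [SetLike.mem_coe, LinearMap.mem_ker, map_add, map_sub, uceTensorMap_tmul,
      uceMk, hg.2.2.1, hg.2.1, hg.2.2.2.1]
    rw [← Submodule.Quotient.mk_add, ← Submodule.Quotient.mk_sub,
      Submodule.Quotient.mk_eq_zero]
    have hrho : SX.rho (SX.bracket x y) a = SY.rho (SY.bracket (g x) (g y)) a := by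
      rw [← hg.2.2.1, hg.2.2.2.2]
    rw [hrho]
    exact Submodule.subset_span (Or.inr ⟨a, g x, g y, g x', g y', rfl⟩)

noncomputable def uceMap {g : X → Y} (hg : IsHLRHom SX SY g) :
    UCE φ SX →ₗ[A] UCE φ SY :=
  Submodule.liftQ _ (uceTensorMap hg) (uceRel_le_ker hg)

lemma uceMap_mk {g : X → Y} (hg : IsHLRHom SX SY g) (a : A) (x y : X) :
    uceMap hg (uceMk φ SX a x y) = uceMk φ SY a (g x) (g y) := by
  rw [uceMap, uceMk, Submodule.liftQ_apply, uceTensorMap_tmul]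

end UceAux


section TauAux

variable {K L : Type}
  [AddCommGroup K] [Module R K] [Module A K] [IsScalarTower R A K]
  [AddCommGroup L] [Module R L] [Module A L] [IsScalarTower R A L]
variable {SK : HLR R A φ K} {SL : HLR R A φ L} {f : K → L}

noncomputable def tauBil (hf : IsHLRHom SK SL f) (hs : Function.Surjective f)
    (hcent : {k : K | f k = 0} ⊆ SK.center) : L →ₗ[R] L →ₗ[R] K :=
  LinearMap.mk₂ R (fun x y => SK.bracket (surjInv hs x) (surjInv hs y))
    (fun x₁ x₂ y => by
      show SK.bracket (surjInv hs (x₁ + x₂)) (surjInv hs y)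
        = SK.bracket (surjInv hs x₁) (surjInv hs y) + SK.bracket (surjInv hs x₂) (surjInv hs y)
      rw [bracket_congr hf hcent (u' := surjInv hs x₁ + surjInv hs x₂)
        (by rw [surjInv_eq hs, hf.1, surjInv_eq hs, surjInv_eq hs]) rfl, SK.add_left])
    (fun r x y => by
      show SK.bracket (surjInv hs (r • x)) (surjInv hs y)
        = r • SK.bracket (surjInv hs x) (surjInv hs y)
      rw [bracket_congr hf hcent (u' := r • surjInv hs x)
        (by rw [surjInv_eq hs, hf.map_smulR, surjInv_eq hs]) rfl, SK.smul_left])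
    (fun x y₁ y₂ => by
      show SK.bracket (surjInv hs x) (surjInv hs (y₁ + y₂))
        = SK.bracket (surjInv hs x) (surjInv hs y₁) + SK.bracket (surjInv hs x) (surjInv hs y₂)
      rw [bracket_congr hf hcent (v' := surjInv hs y₁ + surjInv hs y₂) rfl
        (by rw [surjInv_eq hs, hf.1, surjInv_eq hs, surjInv_eq hs]), SK.add_right])
    (fun r x y => by
      show SK.bracket (surjInv hs x) (surjInv hs (r • y))
        = r • SK.bracket (surjInv hs x) (surjInv hs y)
      rw [bracket_congr hf hcent (v' := r • surjInv hs y) rfl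
        (by rw [surjInv_eq hs, hf.map_smulR, surjInv_eq hs]), SK.smul_right])

noncomputable def tauTensor (hf : IsHLRHom SK SL f) (hs : Function.Surjective f)
    (hcent : {k : K | f k = 0} ⊆ SK.center) : (A ⊗[R] (L ⊗[R] L)) →ₗ[A] K :=
  LinearMap.liftBaseChange A (TensorProduct.lift (tauBil hf hs hcent))

lemma tauTensor_tmul (hf : IsHLRHom SK SL f) (hs : Function.Surjective f)
    (hcent : {k : K | f k = 0} ⊆ SK.center) (a : A) (x y : L) :
    tauTensor hf hs hcent (a ⊗ₜ[R] (x ⊗ₜ[R] y))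
      = a • SK.bracket (surjInv hs x) (surjInv hs y) := by
  rw [tauTensor, LinearMap.liftBaseChange_tmul, TensorProduct.lift.tmul]
  rfl

lemma tau_rel_le_ker (hf : IsHLRHom SK SL f) (hs : Function.Surjective f)
    (hcent : {k : K | f k = 0} ⊆ SK.center)
    (halt : ∀ (a : A) (x : K), a • SK.bracket x x = 0) :
    uceRel φ SL ≤ LinearMap.ker (tauTensor hf hs hcent) := by
  rw [uceRel, Submodule.span_le]
  rintro t ht
  simp only [Set.mem_union, Set.mem_setOf_eq] at ht
  rcases ht with (((⟨a, x, rfl⟩ | ⟨a, x, y, rfl⟩) | ⟨a, x, y, z, rfl⟩) | ⟨a, x, y, x', y', rfl⟩)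
  · simp only [SetLike.mem_coe, LinearMap.mem_ker, tauTensor_tmul]
    exact halt a _
  · simp only [SetLike.mem_coe, LinearMap.mem_ker, map_add, tauTensor_tmul]
    rw [SK.skew (surjInv hs y) (surjInv hs x), smul_neg, add_neg_cancel]
  · simp only [SetLike.mem_coe, LinearMap.mem_ker, map_add, tauTensor_tmul]
    have e1 : SK.bracket (surjInv hs (SL.alpha x)) (surjInv hs (SL.bracket y z))
        = SK.bracket (SK.alpha (surjInv hs x))
            (SK.bracket (surjInv hs y) (surjInv hs z)) :=
      bracket_congr hf hcent (by rw [surjInv_eq hs, hf.2.2.2.1, surjInv_eq hs])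
        (by rw [surjInv_eq hs, hf.2.2.1, surjInv_eq hs, surjInv_eq hs])
    have e2 : SK.bracket (surjInv hs (SL.alpha y)) (surjInv hs (SL.bracket z x))
        = SK.bracket (SK.alpha (surjInv hs y))
            (SK.bracket (surjInv hs z) (surjInv hs x)) :=
      bracket_congr hf hcent (by rw [surjInv_eq hs, hf.2.2.2.1, surjInv_eq hs])
        (by rw [surjInv_eq hs, hf.2.2.1, surjInv_eq hs, surjInv_eq hs])
    have e3 : SK.bracket (surjInv hs (SL.alpha z)) (surjInv hs (SL.bracket x y))
        = SK.bracket (SK.alpha (surjInv hs z))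
            (SK.bracket (surjInv hs x) (surjInv hs y)) :=
      bracket_congr hf hcent (by rw [surjInv_eq hs, hf.2.2.2.1, surjInv_eq hs])
        (by rw [surjInv_eq hs, hf.2.2.1, surjInv_eq hs, surjInv_eq hs])
    rw [e1, e2, e3, ← smul_add, ← smul_add, SK.hom_jacobi, smul_zero]
  · simp only [SetLike.mem_coe, LinearMap.mem_ker, map_add, map_sub, tauTensor_tmul]
    have hfu : f (SK.bracket (surjInv hs x) (surjInv hs y)) = SL.bracket x y := by
      rw [hf.2.2.1, surjInv_eq hs, surjInv_eq hs]
    have hfv : f (SK.bracket (surjInv hs x') (surjInv hs y')) = SL.bracket x' y' := by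
      rw [hf.2.2.1, surjInv_eq hs, surjInv_eq hs]
    have e1 : SK.bracket (surjInv hs (SL.bracket x y)) (surjInv hs (SL.bracket x' y'))
        = SK.bracket (SK.bracket (surjInv hs x) (surjInv hs y))
            (SK.bracket (surjInv hs x') (surjInv hs y')) :=
      bracket_congr hf hcent (by rw [surjInv_eq hs, hfu]) (by rw [surjInv_eq hs, hfv])
    have e2 : SK.bracket (surjInv hs (SL.alpha x')) (surjInv hs (SL.alpha y'))
        = SK.alpha (SK.bracket (surjInv hs x') (surjInv hs y')) := by
      rw [bracket_congr hf hcent (u' := SK.alpha (surjInv hs x'))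
          (v' := SK.alpha (surjInv hs y'))
          (by rw [surjInv_eq hs, hf.2.2.2.1, surjInv_eq hs])
          (by rw [surjInv_eq hs, hf.2.2.2.1, surjInv_eq hs]), SK.alpha_bracket]
    have e3 : SK.bracket (surjInv hs (SL.bracket x y)) (surjInv hs (a • SL.bracket x' y'))
        = SK.bracket (SK.bracket (surjInv hs x) (surjInv hs y))
            (a • SK.bracket (surjInv hs x') (surjInv hs y')) :=
      bracket_congr hf hcent (by rw [surjInv_eq hs, hfu])
        (by rw [surjInv_eq hs, hf.2.1, hfv])
    have e4 : SL.rho (SL.bracket x y) a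
        = SK.rho (SK.bracket (surjInv hs x) (surjInv hs y)) a := by
      rw [← hfu, hf.2.2.2.2]
    rw [e1, e2, e3, e4, one_smul, SK.leibniz]
    abel

noncomputable def tauMap (hf : IsHLRHom SK SL f) (hs : Function.Surjective f)
    (hcent : {k : K | f k = 0} ⊆ SK.center)
    (halt : ∀ (a : A) (x : K), a • SK.bracket x x = 0) : UCE φ SL →ₗ[A] K :=
  Submodule.liftQ _ (tauTensor hf hs hcent) (tau_rel_le_ker hf hs hcent halt)

lemma tauMap_mk (hf : IsHLRHom SK SL f) (hs : Function.Surjective f)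
    (hcent : {k : K | f k = 0} ⊆ SK.center)
    (halt : ∀ (a : A) (x : K), a • SK.bracket x x = 0) (a : A) (x y : L) :
    tauMap hf hs hcent halt (uceMk φ SL a x y)
      = a • SK.bracket (surjInv hs x) (surjInv hs y) := by
  rw [tauMap, uceMk, Submodule.liftQ_apply, tauTensor_tmul]

end TauAux


section MainAux

variable {K L : Type}
  [AddCommGroup K] [Module R K] [Module A K] [IsScalarTower R A K]
  [AddCommGroup L] [Module R L] [Module A L] [IsScalarTower R A L]
variable {SK : HLR R A φ K} {SL : HLR R A φ L} {f : K → L}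
variable (hf : IsHLRHom SK SL f) (hs : Function.Surjective f)
  (hcent : {k : K | f k = 0} ⊆ SK.center)
  (halt : ∀ (a : A) (x : K), a • SK.bracket x x = 0)
variable {UL : HLR R A φ (UCE φ SL)}

lemma f_tau_mk (a : A) (x y : L) :
    f (tauMap hf hs hcent halt (uceMk φ SL a x y)) = a • SL.bracket x y := by
  rw [tauMap_mk, hf.2.1, hf.2.2.1, surjInv_eq hs, surjInv_eq hs]

lemma tau_bracket (hUL : IsUceStructure φ SL UL) :
    ∀ ξ η, tauMap hf hs hcent halt (UL.bracket ξ η)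
      = SK.bracket (tauMap hf hs hcent halt ξ) (tauMap hf hs hcent halt η) := by
  refine uce_induction SL (fun ξ => ∀ η, tauMap hf hs hcent halt (UL.bracket ξ η)
    = SK.bracket (tauMap hf hs hcent halt ξ) (tauMap hf hs hcent halt η)) ?_ ?_ ?_
  all_goals beta_reduce
  · intro η
    rw [HLR.bracket_zero_left, map_zero, HLR.bracket_zero_left]
  · intro a₁ x₁ y₁
    refine uce_induction SL (fun η => tauMap hf hs hcent halt
      (UL.bracket (uceMk φ SL a₁ x₁ y₁) η)
      = SK.bracket (tauMap hf hs hcent halt (uceMk φ SL a₁ x₁ y₁))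
          (tauMap hf hs hcent halt η)) ?_ ?_ ?_
    all_goals beta_reduce
    · rw [HLR.bracket_zero_right, map_zero, HLR.bracket_zero_right]
    · intro a₂ x₂ y₂
      have hfu1 : f (SK.bracket (surjInv hs x₁) (surjInv hs y₁)) = SL.bracket x₁ y₁ := by
        rw [hf.2.2.1, surjInv_eq hs, surjInv_eq hs]
      have hfu2 : f (SK.bracket (surjInv hs x₂) (surjInv hs y₂)) = SL.bracket x₂ y₂ := by
        rw [hf.2.2.1, surjInv_eq hs, surjInv_eq hs]
      have eb : SK.bracket (surjInv hs (SL.bracket x₁ y₁)) (surjInv hs (SL.bracket x₂ y₂))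
          = SK.bracket (SK.bracket (surjInv hs x₁) (surjInv hs y₁))
              (SK.bracket (surjInv hs x₂) (surjInv hs y₂)) :=
        bracket_congr hf hcent (by rw [surjInv_eq hs, hfu1]) (by rw [surjInv_eq hs, hfu2])
      have ea1 : SK.bracket (surjInv hs (SL.alpha x₁)) (surjInv hs (SL.alpha y₁))
          = SK.alpha (SK.bracket (surjInv hs x₁) (surjInv hs y₁)) := by
        rw [bracket_congr hf hcent (u' := SK.alpha (surjInv hs x₁))
            (v' := SK.alpha (surjInv hs y₁))
            (by rw [surjInv_eq hs, hf.2.2.2.1, surjInv_eq hs])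
            (by rw [surjInv_eq hs, hf.2.2.2.1, surjInv_eq hs]), SK.alpha_bracket]
      have ea2 : SK.bracket (surjInv hs (SL.alpha x₂)) (surjInv hs (SL.alpha y₂))
          = SK.alpha (SK.bracket (surjInv hs x₂) (surjInv hs y₂)) := by
        rw [bracket_congr hf hcent (u' := SK.alpha (surjInv hs x₂))
            (v' := SK.alpha (surjInv hs y₂))
            (by rw [surjInv_eq hs, hf.2.2.2.1, surjInv_eq hs])
            (by rw [surjInv_eq hs, hf.2.2.2.1, surjInv_eq hs]), SK.alpha_bracket]
      have er1 : SL.rho (SL.bracket x₁ y₁) a₂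
          = SK.rho (SK.bracket (surjInv hs x₁) (surjInv hs y₁)) a₂ := by
        rw [← hfu1, hf.2.2.2.2]
      have er2 : SL.rho (SL.bracket x₂ y₂) a₁
          = SK.rho (SK.bracket (surjInv hs x₂) (surjInv hs y₂)) a₁ := by
        rw [← hfu2, hf.2.2.2.2]
      rw [hUL.1 a₁ a₂ x₁ y₁ x₂ y₂, map_sub, map_add]
      simp only [tauMap_mk]
      rw [eb, ea1, ea2, er1, er2, HLR.bracket_smul_smul, map_mul]
    · intro η₁ η₂ h1 h2
      rw [UL.add_right, map_add, h1, h2, map_add, SK.add_right]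
  · intro ξ₁ ξ₂ h1 h2
    intro η
    rw [UL.add_left, map_add, h1, h2, map_add, SK.add_left]

lemma tau_alpha (hUL : IsUceStructure φ SL UL) :
    ∀ ξ, tauMap hf hs hcent halt (UL.alpha ξ)
      = SK.alpha (tauMap hf hs hcent halt ξ) := by
  refine uce_induction SL (fun ξ => tauMap hf hs hcent halt (UL.alpha ξ)
    = SK.alpha (tauMap hf hs hcent halt ξ)) ?_ ?_ ?_
  all_goals beta_reduce
  · rw [HLR.alpha_zero, map_zero, HLR.alpha_zero]
  · intro a x y
    have ea : SK.bracket (surjInv hs (SL.alpha x)) (surjInv hs (SL.alpha y))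
        = SK.alpha (SK.bracket (surjInv hs x) (surjInv hs y)) := by
      rw [bracket_congr hf hcent (u' := SK.alpha (surjInv hs x))
          (v' := SK.alpha (surjInv hs y))
          (by rw [surjInv_eq hs, hf.2.2.2.1, surjInv_eq hs])
          (by rw [surjInv_eq hs, hf.2.2.2.1, surjInv_eq hs]), SK.alpha_bracket]
    rw [hUL.2.1, tauMap_mk, tauMap_mk, ea, ← SK.alpha_smulA]
  · intro ξ₁ ξ₂ h1 h2
    rw [UL.alpha_add, map_add, h1, h2, map_add, SK.alpha_add]

lemma tau_rho (hUL : IsUceStructure φ SL UL) :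
    ∀ ξ (b : A), SK.rho (tauMap hf hs hcent halt ξ) b = UL.rho ξ b := by
  refine uce_induction SL (fun ξ => ∀ b : A,
    SK.rho (tauMap hf hs hcent halt ξ) b = UL.rho ξ b) ?_ ?_ ?_
  all_goals beta_reduce
  · intro b
    rw [map_zero, HLR.rho_zero_left, HLR.rho_zero_left]
  · intro a x y b
    have er : SL.rho (SL.bracket x y) b
        = SK.rho (SK.bracket (surjInv hs x) (surjInv hs y)) b := by
      rw [← show f (SK.bracket (surjInv hs x) (surjInv hs y)) = SL.bracket x y by
        rw [hf.2.2.1, surjInv_eq hs, surjInv_eq hs], hf.2.2.2.2]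
    rw [tauMap_mk, SK.rho_smulA, hUL.2.2, er]
  · intro ξ₁ ξ₂ h1 h2 b
    rw [map_add, SK.rho_add_left, UL.rho_add_left, h1, h2]


variable {UK : HLR R A φ (UCE φ SK)} {uK : UCE φ SK → K} {F : UCE φ SK → UCE φ SL}

lemma tau_F (huK : IsUceMap φ SK uK) (hF : IsUceFunctorMap φ SK SL UK UL f F) :
    ∀ ξ, tauMap hf hs hcent halt (F ξ) = uK ξ := by
  have h0 : tauMap hf hs hcent halt (F 0) = uK 0 := by
    rw [addhom_zero hF.1.1, map_zero, addhom_zero huK.1]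
  have hmk : ∀ (a : A) (x y : K),
      tauMap hf hs hcent halt (F (uceMk φ SK a x y)) = uK (uceMk φ SK a x y) := by
    intro a x y
    rw [hF.2, tauMap_mk, huK.2.2,
      bracket_congr hf hcent (u' := x) (v' := y) (surjInv_eq hs (f x)) (surjInv_eq hs (f y))]
  exact uce_induction SK (fun ξ => tauMap hf hs hcent halt (F ξ) = uK ξ) h0 hmk
    (fun ξ η h1 h2 => by beta_reduce; rw [hF.1.1, map_add, h1, h2, huK.1])

include hs in
lemma F_surj (hF : IsUceFunctorMap φ SK SL UK UL f F) : Function.Surjective F := by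
  intro η
  refine uce_induction SL (fun η => ∃ ξ, F ξ = η) ?_ ?_ ?_ η
  · exact ⟨0, addhom_zero hF.1.1⟩
  · intro a x y
    exact ⟨uceMk φ SK a (surjInv hs x) (surjInv hs y),
      by rw [hF.2, surjInv_eq hs, surjInv_eq hs]⟩
  · rintro ξ₁ ξ₂ ⟨η₁, rfl⟩ ⟨η₂, rfl⟩
    exact ⟨η₁ + η₂, hF.1.1 η₁ η₂⟩

lemma tau_surj (hap : SK.IsAlphaPerfect) :
    Function.Surjective (tauMap hf hs hcent halt) := by
  rw [← LinearMap.range_eq_top, eq_top_iff]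
  have hap' : Submodule.span A
      {z : K | ∃ x y, z = SK.bracket (SK.alpha x) (SK.alpha y)} = ⊤ := hap
  rw [← hap']
  refine Submodule.span_le.mpr ?_
  rintro z ⟨x, y, rfl⟩
  simp only [SetLike.mem_coe, LinearMap.mem_range]
  refine ⟨uceMk φ SL 1 (f (SK.alpha x)) (f (SK.alpha y)), ?_⟩
  rw [tauMap_mk, one_smul]
  exact bracket_congr hf hcent (surjInv_eq hs _) (surjInv_eq hs _)

lemma ker_tau (huK : IsUceMap φ SK uK) (hF : IsUceFunctorMap φ SK SL UK UL f F) :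
    {η | tauMap hf hs hcent halt η = 0} = F '' {ξ | uK ξ = 0} := by
  ext η
  simp only [Set.mem_setOf_eq, Set.mem_image]
  constructor
  · intro h0
    obtain ⟨ξ, rfl⟩ := F_surj hs hF η
    exact ⟨ξ, by rw [← tau_F hf hs hcent halt huK hF ξ]; exact h0, rfl⟩
  · rintro ⟨ξ, hξ, rfl⟩
    rw [tau_F hf hs hcent halt huK hF ξ]
    exact hξ

include hf hcent in
lemma lifts_agree (hap : SK.IsAlphaPerfect) {g₁ g₂ : K → K}
    (hg₁ : IsHLRHom SK SK g₁) (hg₂ : IsHLRHom SK SK g₂)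
    (h12 : ∀ k, f (g₁ k) = f (g₂ k)) : ∀ k, g₁ k = g₂ k := by
  let D : Submodule A K :=
    { carrier := {k | g₁ k = g₂ k}
      add_mem' := by
        intro a b ha hb
        simp only [Set.mem_setOf_eq] at *
        rw [hg₁.1, hg₂.1, ha, hb]
      zero_mem' := by
        simp only [Set.mem_setOf_eq]
        rw [hg₁.map_zero', hg₂.map_zero']
      smul_mem' := by
        intro c k hk
        simp only [Set.mem_setOf_eq] at *
        rw [hg₁.2.1, hg₂.2.1, hk] }
  have key : Submodule.span A
      {z : K | ∃ x y, z = SK.bracket (SK.alpha x) (SK.alpha y)} ≤ D := by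
    refine Submodule.span_le.mpr ?_
    rintro z ⟨x, y, rfl⟩
    show g₁ _ = g₂ _
    rw [hg₁.2.2.1, hg₂.2.2.1]
    exact bracket_congr hf hcent (h12 _) (h12 _)
  intro k
  have hap' : Submodule.span A
      {z : K | ∃ x y, z = SK.bracket (SK.alpha x) (SK.alpha y)} = ⊤ := hap
  exact key (by rw [hap']; exact Submodule.mem_top)


lemma uceMap_isHLRHom {h : L → L} (hUL : IsUceStructure φ SL UL) (hh : IsHLRHom SL SL h) :
    IsHLRHom UL UL (uceMap hh) := by
  refine ⟨fun ξ η => map_add _ ξ η, fun a ξ => map_smul _ a ξ, ?_, ?_, ?_⟩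
  · refine uce_induction SL (fun ξ => ∀ η, uceMap hh (UL.bracket ξ η)
      = UL.bracket (uceMap hh ξ) (uceMap hh η)) ?_ ?_ ?_
    all_goals beta_reduce
    · intro η
      rw [HLR.bracket_zero_left, map_zero, HLR.bracket_zero_left]
    · intro a₁ x₁ y₁
      refine uce_induction SL (fun η => uceMap hh (UL.bracket (uceMk φ SL a₁ x₁ y₁) η)
        = UL.bracket (uceMap hh (uceMk φ SL a₁ x₁ y₁)) (uceMap hh η)) ?_ ?_ ?_
      all_goals beta_reduce
      · rw [HLR.bracket_zero_right, map_zero, HLR.bracket_zero_right]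
      · intro a₂ x₂ y₂
        have hr1 : SL.rho (SL.bracket (h x₁) (h y₁)) a₂ = SL.rho (SL.bracket x₁ y₁) a₂ := by
          rw [← hh.2.2.1, hh.2.2.2.2]
        have hr2 : SL.rho (SL.bracket (h x₂) (h y₂)) a₁ = SL.rho (SL.bracket x₂ y₂) a₁ := by
          rw [← hh.2.2.1, hh.2.2.2.2]
        rw [hUL.1, map_sub, map_add]
        simp only [uceMap_mk]
        rw [hUL.1, hr1, hr2]
        simp only [hh.2.2.1, hh.2.2.2.1]
      · intro η₁ η₂ h1 h2
        rw [UL.add_right, map_add, h1, h2, map_add, UL.add_right]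
    · intro ξ₁ ξ₂ h1 h2 η
      rw [UL.add_left, map_add, h1 η, h2 η, map_add, UL.add_left]
  · refine uce_induction SL (fun ξ => uceMap hh (UL.alpha ξ)
      = UL.alpha (uceMap hh ξ)) ?_ ?_ ?_
    all_goals beta_reduce
    · rw [HLR.alpha_zero, map_zero, HLR.alpha_zero]
    · intro a x y
      rw [hUL.2.1, uceMap_mk, uceMap_mk, hUL.2.1, hh.2.2.2.1, hh.2.2.2.1]
    · intro ξ₁ ξ₂ h1 h2
      rw [UL.alpha_add, map_add, h1, h2, map_add, UL.alpha_add]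
  · refine uce_induction SL (fun ξ => ∀ b : A, UL.rho (uceMap hh ξ) b
      = UL.rho ξ b) ?_ ?_ ?_
    all_goals beta_reduce
    · intro b
      rw [map_zero]
    · intro a x y b
      rw [uceMap_mk, hUL.2.2, hUL.2.2, ← hh.2.2.1, hh.2.2.2.2]
    · intro ξ₁ ξ₂ h1 h2 b
      rw [map_add, UL.rho_add_left, UL.rho_add_left, h1, h2]

end MainAux

end AuxProof

section Statement11

variable {R A : Type} [CommRing R] [CommRing A] [Algebra R A] (φ : A →ₐ[R] A)
variable {K L : Type}
  [AddCommGroup K] [Module R K] [Module A K] [IsScalarTower R A K]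
  [AddCommGroup L] [Module R L] [Module A L] [IsScalarTower R A L]

/-- `h` is an automorphism of `(L, α_L)` such that the induced automorphism
`uce^φ_A(h)` maps `P` onto `P`. -/
def LiftableAut (SL : HLR R A φ L) (UL : HLR R A φ (UCE φ SL))
    (P : Set (UCE φ SL)) (h : L → L) : Prop :=
  IsHLRHom SL SL h ∧ Function.Bijective h ∧
  ∃ H : UCE φ SL → UCE φ SL, IsHLRHom UL UL H ∧
    (∀ (a : A) (x y : L), H (uceMk φ SL a x y) = uceMk φ SL a (h x) (h y)) ∧
    H '' P = P

/-- `g` is an automorphism of `(K, α_K)` with `g(Ker f) = Ker f`. -/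
def KerPreservingAut (SK : HLR R A φ K) (f : K → L) (g : K → K) : Prop :=
  IsHLRHom SK SK g ∧ Function.Bijective g ∧
  g '' {k | f k = 0} = {k | f k = 0}

/-- lifting of automorphisms to central extensions with `α`-perfect middle
algebra: an automorphism `h` of `(L, α_L)` lifts (uniquely) to an automorphism of
`(K, α_K)` iff `uce^φ_A(h)(P) = P`, where `P = uce^φ_A(f)(Ker u_K)`; any lift preserves
`Ker f`, and `h ↦ h̃` is a group isomorphism onto the `Ker f`-preserving automorphisms. -/
theorem statement_11
    (hφ : Function.Surjective ⇑φ)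
    {N : Type} [AddCommGroup N] [Module R N] [Module A N] [IsScalarTower R A N]
    (SN : HLR R A φ N) (SK : HLR R A φ K) (SL : HLR R A φ L)
    (j : N → K) (f : K → L)
    (hce : IsCentralExt SN SK SL j f) (hap : SK.IsAlphaPerfect)
    (UK : HLR R A φ (UCE φ SK)) (hUK : IsUceStructure φ SK UK)
    (UL : HLR R A φ (UCE φ SL)) (hUL : IsUceStructure φ SL UL)
    (uK : UCE φ SK → K) (huK : IsUceMap φ SK uK)
    (F : UCE φ SK → UCE φ SL) (hF : IsUceFunctorMap φ SK SL UK UL f F)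
    (P : Set (UCE φ SL)) (hP : P = F '' {ξ | uK ξ = 0}) :
    (∀ h : L → L, IsHLRHom SL SL h → Function.Bijective h →
      ((∃! ht : K → K, IsHLRHom SK SK ht ∧ Function.Bijective ht ∧
          ∀ k, h (f k) = f (ht k)) ↔
        LiftableAut φ SL UL P h)) ∧
    (∀ (h : L → L) (ht : K → K), IsHLRHom SL SL h → Function.Bijective h →
      IsHLRHom SK SK ht → Function.Bijective ht → (∀ k, h (f k) = f (ht k)) →
      ht '' {k | f k = 0} = {k | f k = 0}) ∧
    (∃ Φ : (L → L) → (K → K),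
      (∀ h : L → L, LiftableAut φ SL UL P h →
        KerPreservingAut φ SK f (Φ h) ∧ ∀ k, h (f k) = f (Φ h k)) ∧
      (∀ h₁ h₂ : L → L, LiftableAut φ SL UL P h₁ → LiftableAut φ SL UL P h₂ →
        Φ (h₁ ∘ h₂) = Φ h₁ ∘ Φ h₂) ∧
      Set.BijOn Φ {h | LiftableAut φ SL UL P h} {g | KerPreservingAut φ SK f g}) := by
  classical
  obtain ⟨hj, hfhom, hjinj, hfsurj, hrange, hcent⟩ := hce
  have halt : ∀ (a : A) (x : K), a • SK.bracket x x = 0 := by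
    intro a x
    have h0 : uceMk φ SK a x x = 0 := by
      rw [uceMk, Submodule.Quotient.mk_eq_zero]
      exact Submodule.subset_span (Or.inl (Or.inl (Or.inl ⟨a, x, rfl⟩)))
    have h1 := huK.2.2 a x x
    rw [h0, addhom_zero huK.1] at h1
    exact h1.symm
  obtain ⟨T, Tadd, Tsub, Tsmul, Tbr, Tal, Trh, TF, Tsurj, Tker, Tfmk⟩ :
      ∃ T : UCE φ SL → K,
        (∀ ξ η, T (ξ + η) = T ξ + T η) ∧
        (∀ ξ η, T (ξ - η) = T ξ - T η) ∧
        (∀ (a : A) (ξ : UCE φ SL), T (a • ξ) = a • T ξ) ∧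
        (∀ ξ η, T (UL.bracket ξ η) = SK.bracket (T ξ) (T η)) ∧
        (∀ ξ, T (UL.alpha ξ) = SK.alpha (T ξ)) ∧
        (∀ ξ (b : A), SK.rho (T ξ) b = UL.rho ξ b) ∧
        (∀ ξ, T (F ξ) = uK ξ) ∧
        Function.Surjective T ∧
        {η | T η = 0} = F '' {ξ | uK ξ = 0} ∧
        (∀ (a : A) (x y : L), f (T (uceMk φ SL a x y)) = a • SL.bracket x y) :=
    ⟨tauMap hfhom hfsurj hcent halt,
      fun ξ η => map_add _ ξ η, fun ξ η => map_sub _ ξ η, fun a ξ => map_smul _ a ξ,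
      tau_bracket hfhom hfsurj hcent halt hUL, tau_alpha hfhom hfsurj hcent halt hUL,
      tau_rho hfhom hfsurj hcent halt hUL, tau_F hfhom hfsurj hcent halt huK hF,
      tau_surj hfhom hfsurj hcent halt hap, ker_tau hfhom hfsurj hcent halt huK hF,
      f_tau_mk hfhom hfsurj hcent halt⟩
  have Tzero : T 0 = 0 := addhom_zero Tadd
  have TkerP : ∀ ζ : UCE φ SL, T ζ = 0 ↔ ζ ∈ P := by
    intro ζ
    rw [hP, ← Tker]
    exact Iff.rfl
  have agree : ∀ g₁ g₂ : K → K, IsHLRHom SK SK g₁ → IsHLRHom SK SK g₂ →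
      (∀ k, f (g₁ k) = f (g₂ k)) → g₁ = g₂ :=
    fun g₁ g₂ h1 h2 h12 => funext (lifts_agree hfhom hcent hap h1 h2 h12)
  have partII : ∀ (h : L → L) (ht : K → K), IsHLRHom SL SL h → Function.Bijective h →
      IsHLRHom SK SK ht → Function.Bijective ht → (∀ k, h (f k) = f (ht k)) →
      ht '' {k | f k = 0} = {k | f k = 0} := by
    intro h ht hh hhb hht hhtb hlift
    ext k
    simp only [Set.mem_image, Set.mem_setOf_eq]
    constructor
    · rintro ⟨c, hc, rfl⟩
      rw [← hlift, hc, addhom_zero hh.1]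
    · intro hk
      obtain ⟨c, rfl⟩ := hhtb.2 k
      refine ⟨c, ?_, rfl⟩
      have h1 : h (f c) = h 0 := by
        rw [addhom_zero hh.1, hlift]
        exact hk
      exact hhb.1 h1
  have HP_sub : ∀ (h : L → L) (g : K → K), IsHLRHom SL SL h → IsHLRHom SK SK g →
      (∀ k, h (f k) = f (g k)) →
      ∀ H : UCE φ SL → UCE φ SL, (∀ ξ η, H (ξ + η) = H ξ + H η) →
      (∀ (a : A) (x y : L), H (uceMk φ SL a x y) = uceMk φ SL a (h x) (h y)) →
      H '' P ⊆ P := by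
    intro h g hh hg hlift H Hadd Hmk
    have hFG : ∀ ξ, F (uceMap hg ξ) = H (F ξ) := by
      refine uce_induction SK (fun ξ => F (uceMap hg ξ) = H (F ξ)) ?_ ?_ ?_
      all_goals beta_reduce
      · rw [map_zero, addhom_zero hF.1.1, addhom_zero Hadd]
      · intro a x y
        rw [uceMap_mk, hF.2, hF.2, Hmk, hlift, hlift]
      · intro ξ₁ ξ₂ h1 h2
        rw [map_add, hF.1.1, h1, h2, hF.1.1, Hadd]
    have hGuK : ∀ ξ, uK (uceMap hg ξ) = g (uK ξ) := by
      refine uce_induction SK (fun ξ => uK (uceMap hg ξ) = g (uK ξ)) ?_ ?_ ?_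
      all_goals beta_reduce
      · rw [map_zero, addhom_zero huK.1, hg.map_zero']
      · intro a x y
        rw [uceMap_mk, huK.2.2, huK.2.2, hg.2.1, hg.2.2.1]
      · intro ξ₁ ξ₂ h1 h2
        rw [map_add, huK.1, h1, h2, huK.1, hg.1]
    rintro η ⟨ζ, hζ, rfl⟩
    rw [hP] at hζ
    obtain ⟨ξ, hξ, rfl⟩ := hζ
    rw [hP, ← hFG]
    refine ⟨uceMap hg ξ, ?_, rfl⟩
    show uK (uceMap hg ξ) = 0
    have hξ0 : uK ξ = 0 := hξ
    rw [hGuK, hξ0, hg.map_zero']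
  have HP_eq : ∀ (h : L → L) (g : K → K), IsHLRHom SL SL h → Function.Bijective h →
      IsHLRHom SK SK g → Function.Bijective g → (∀ k, h (f k) = f (g k)) →
      ∀ H : UCE φ SL → UCE φ SL, (∀ ξ η, H (ξ + η) = H ξ + H η) →
      (∀ (a : A) (x y : L), H (uceMk φ SL a x y) = uceMk φ SL a (h x) (h y)) →
      H '' P = P := by
    intro h g hh hhb hg hgb hlift H Hadd Hmk
    have hh' : IsHLRHom SL SL (Function.invFun h) := hh.inverse hhb
    have hg' : IsHLRHom SK SK (Function.invFun g) := hg.inverse hgb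
    have hlift' : ∀ k, Function.invFun h (f k) = f (Function.invFun g k) := by
      intro k
      apply hhb.1
      rw [Function.rightInverse_invFun hhb.2, hlift (Function.invFun g k),
        Function.rightInverse_invFun hgb.2]
    have hsub := HP_sub h g hh hg hlift H Hadd Hmk
    have hsub' := HP_sub (Function.invFun h) (Function.invFun g) hh' hg' hlift'
      (uceMap hh') (fun ξ η => map_add _ ξ η) (fun a x y => uceMap_mk hh' a x y)
    have hHH' : ∀ η, H (uceMap hh' η) = η := by
      refine uce_induction SL (fun η => H (uceMap hh' η) = η) ?_ ?_ ?_
      all_goals beta_reduce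
      · rw [map_zero, addhom_zero Hadd]
      · intro a x y
        rw [uceMap_mk, Hmk, Function.rightInverse_invFun hhb.2,
          Function.rightInverse_invFun hhb.2]
      · intro ξ₁ ξ₂ h1 h2
        rw [map_add, Hadd, h1, h2]
    refine Set.Subset.antisymm hsub ?_
    intro ζ hζ
    exact ⟨uceMap hh' ζ, hsub' ⟨ζ, hζ, rfl⟩, hHH' ζ⟩
  have lift_exists : ∀ h : L → L, LiftableAut φ SL UL P h →
      ∃ g : K → K, IsHLRHom SK SK g ∧ Function.Bijective g ∧ ∀ k, h (f k) = f (g k) := by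
    intro h hla
    obtain ⟨hh, hhb, H, hHhom, hHmk, hHP⟩ := hla
    have hh' : IsHLRHom SL SL (Function.invFun h) := hh.inverse hhb
    have hH'H : ∀ η, uceMap hh' (H η) = η := by
      refine uce_induction SL (fun η => uceMap hh' (H η) = η) ?_ ?_ ?_
      all_goals beta_reduce
      · rw [addhom_zero hHhom.1, map_zero]
      · intro a x y
        rw [hHmk, uceMap_mk, Function.leftInverse_invFun hhb.1,
          Function.leftInverse_invFun hhb.1]
      · intro ξ₁ ξ₂ h1 h2
        rw [hHhom.1, map_add, h1, h2]
    have hH'P : ∀ ζ, ζ ∈ P → uceMap hh' ζ ∈ P := by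
      intro ζ hζ
      rw [← hHP] at hζ
      obtain ⟨ζ₀, h₀, rfl⟩ := hζ
      rw [hH'H]
      exact h₀
    have HkerT : ∀ ζ, T ζ = 0 → T (H ζ) = 0 := by
      intro ζ h0
      have h1 : ζ ∈ P := (TkerP ζ).mp h0
      have h2 : H ζ ∈ P := by rw [← hHP]; exact ⟨ζ, h1, rfl⟩
      exact (TkerP (H ζ)).mpr h2
    have H'kerT : ∀ ζ, T ζ = 0 → T (uceMap hh' ζ) = 0 := by
      intro ζ h0
      exact (TkerP _).mpr (hH'P ζ ((TkerP ζ).mp h0))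
    have descend : ∀ Hf : UCE φ SL → UCE φ SL, (∀ ξ η, Hf (ξ + η) = Hf ξ + Hf η) →
        (∀ ζ, T ζ = 0 → T (Hf ζ) = 0) →
        ∃ gf : K → K, ∀ η, gf (T η) = T (Hf η) := by
      intro Hf Hfadd Hfker
      refine ⟨fun k => T (Hf (surjInv Tsurj k)), ?_⟩
      intro η
      have h1 : T (surjInv Tsurj (T η) - η) = 0 := by
        rw [Tsub, surjInv_eq Tsurj, sub_self]
      have h2 := Hfker _ h1
      have h3 : Hf (surjInv Tsurj (T η)) = Hf (surjInv Tsurj (T η) - η) + Hf η := by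
        rw [← Hfadd, sub_add_cancel]
      show T (Hf (surjInv Tsurj (T η))) = T (Hf η)
      rw [h3, Tadd, h2, zero_add]
    obtain ⟨g, hgT⟩ := descend H hHhom.1 HkerT
    obtain ⟨g', hg'T⟩ := descend (uceMap hh') (fun ξ η => map_add _ ξ η) H'kerT
    have hHH' : ∀ η, H (uceMap hh' η) = η := by
      refine uce_induction SL (fun η => H (uceMap hh' η) = η) ?_ ?_ ?_
      all_goals beta_reduce
      · rw [map_zero, addhom_zero hHhom.1]
      · intro a x y
        rw [uceMap_mk, hHmk, Function.rightInverse_invFun hhb.2,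
          Function.rightInverse_invFun hhb.2]
      · intro ξ₁ ξ₂ h1 h2
        rw [map_add, hHhom.1, h1, h2]
    have g'g : Function.LeftInverse g' g := by
      intro k
      obtain ⟨η, rfl⟩ := Tsurj k
      rw [hgT, hg'T, hH'H]
    have gg' : Function.RightInverse g' g := by
      intro k
      obtain ⟨η, rfl⟩ := Tsurj k
      rw [hg'T, hgT, hHH']
    have hgbij : Function.Bijective g :=
      Function.bijective_iff_has_inverse.mpr ⟨g', g'g, gg'⟩
    have hghom : IsHLRHom SK SK g := by
      refine ⟨?_, ?_, ?_, ?_, ?_⟩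
      · intro k₁ k₂
        obtain ⟨η₁, rfl⟩ := Tsurj k₁
        obtain ⟨η₂, rfl⟩ := Tsurj k₂
        rw [← Tadd, hgT, hHhom.1, Tadd, hgT, hgT]
      · intro a k
        obtain ⟨η, rfl⟩ := Tsurj k
        rw [← Tsmul, hgT, hHhom.2.1, Tsmul, hgT]
      · intro k₁ k₂
        obtain ⟨η₁, rfl⟩ := Tsurj k₁
        obtain ⟨η₂, rfl⟩ := Tsurj k₂
        rw [← Tbr, hgT, hHhom.2.2.1, Tbr, hgT, hgT]
      · intro k
        obtain ⟨η, rfl⟩ := Tsurj k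
        rw [← Tal, hgT, hHhom.2.2.2.1, Tal, hgT]
      · intro k a
        obtain ⟨η, rfl⟩ := Tsurj k
        rw [hgT, Trh, hHhom.2.2.2.2, Trh]
    have hglift : ∀ k, h (f k) = f (g k) := by
      have key : ∀ η, f (T (H η)) = h (f (T η)) := by
        refine uce_induction SL (fun η => f (T (H η)) = h (f (T η))) ?_ ?_ ?_
        all_goals beta_reduce
        · rw [addhom_zero hHhom.1, Tzero, hfhom.map_zero', addhom_zero hh.1]
        · intro a x y
          rw [hHmk, Tfmk, Tfmk, hh.2.1, hh.2.2.1]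
        · intro ξ₁ ξ₂ h1 h2
          rw [hHhom.1, Tadd, hfhom.1, h1, h2, Tadd, hfhom.1, hh.1]
      intro k
      obtain ⟨η, rfl⟩ := Tsurj k
      rw [hgT, key]
    exact ⟨g, hghom, hgbij, hglift⟩
  have liftable_of : ∀ (h : L → L) (g : K → K), IsHLRHom SL SL h → Function.Bijective h →
      IsHLRHom SK SK g → Function.Bijective g → (∀ k, h (f k) = f (g k)) →
      LiftableAut φ SL UL P h := by
    intro h g hh hhb hg hgb hlift
    exact ⟨hh, hhb, uceMap hh, uceMap_isHLRHom hUL hh, fun a x y => uceMap_mk hh a x y,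
      HP_eq h g hh hhb hg hgb hlift (uceMap hh) (fun ξ η => map_add _ ξ η)
        (fun a x y => uceMap_mk hh a x y)⟩
  obtain ⟨Φ, hΦ⟩ : ∃ Φ : (L → L) → (K → K), ∀ h : L → L, LiftableAut φ SL UL P h →
      IsHLRHom SK SK (Φ h) ∧ Function.Bijective (Φ h) ∧ ∀ k, h (f k) = f (Φ h k) := by
    refine ⟨fun h => if hc : ∃ g : K → K, IsHLRHom SK SK g ∧ Function.Bijective g ∧
        ∀ k, h (f k) = f (g k) then hc.choose else id, ?_⟩
    intro h hla
    have hc : ∃ g : K → K, IsHLRHom SK SK g ∧ Function.Bijective g ∧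
        ∀ k, h (f k) = f (g k) := lift_exists h hla
    simp only [dif_pos hc]
    exact hc.choose_spec
  have Φuniq : ∀ (h : L → L) (g : K → K), LiftableAut φ SL UL P h → IsHLRHom SK SK g →
      (∀ k, h (f k) = f (g k)) → Φ h = g := by
    intro h g hla hg hlift
    obtain ⟨c1, c2, c3⟩ := hΦ h hla
    exact agree (Φ h) g c1 hg (fun k => by rw [← c3, ← hlift])
  refine ⟨?_, partII, ?_⟩
  · intro h hh hhb
    constructor
    · rintro ⟨g, ⟨hg, hgb, hlift⟩, -⟩
      exact liftable_of h g hh hhb hg hgb hlift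
    · intro hla
      obtain ⟨g, hg, hgb, hlift⟩ := lift_exists h hla
      refine ⟨g, ⟨hg, hgb, hlift⟩, ?_⟩
      rintro g' ⟨hg', hgb', hlift'⟩
      exact agree g' g hg' hg (fun k => by rw [← hlift', ← hlift])
  · refine ⟨Φ, ?_, ?_, ?_⟩
    · intro h hla
      obtain ⟨c1, c2, c3⟩ := hΦ h hla
      exact ⟨⟨c1, c2, partII h (Φ h) hla.1 hla.2.1 c1 c2 c3⟩, c3⟩
    · intro h₁ h₂ hla₁ hla₂
      obtain ⟨a1, a2, a3⟩ := hΦ h₁ hla₁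
      obtain ⟨b1, b2, b3⟩ := hΦ h₂ hla₂
      have hclift : ∀ k, (h₁ ∘ h₂) (f k) = f ((Φ h₁ ∘ Φ h₂) k) := by
        intro k
        show h₁ (h₂ (f k)) = f (Φ h₁ (Φ h₂ k))
        rw [b3, a3]
      have hccomp : LiftableAut φ SL UL P (h₁ ∘ h₂) :=
        liftable_of (h₁ ∘ h₂) (Φ h₁ ∘ Φ h₂) (IsHLRHom.comp hla₂.1 hla₁.1)
          (hla₁.2.1.comp hla₂.2.1) (IsHLRHom.comp b1 a1) (a2.comp b2) hclift
      exact Φuniq (h₁ ∘ h₂) (Φ h₁ ∘ Φ h₂) hccomp (IsHLRHom.comp b1 a1) hclift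
    · refine ⟨?_, ?_, ?_⟩
      · intro h hla
        obtain ⟨c1, c2, c3⟩ := hΦ h hla
        exact ⟨c1, c2, partII h (Φ h) hla.1 hla.2.1 c1 c2 c3⟩
      · intro h₁ hm₁ h₂ hm₂ heq
        funext l
        obtain ⟨k, rfl⟩ := hfsurj l
        rw [(hΦ h₁ hm₁).2.2 k, (hΦ h₂ hm₂).2.2 k, heq]
      · intro g hg
        obtain ⟨hghom, hgbij, hgker⟩ := hg
        have hgker₁ : ∀ c : K, f c = 0 → f (g c) = 0 := by
          intro c hc
          have h1 : g c ∈ {k : K | f k = 0} := by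
            rw [← hgker]
            exact ⟨c, hc, rfl⟩
          exact h1
        have hg'hom : IsHLRHom SK SK (Function.invFun g) := hghom.inverse hgbij
        have hgker₂ : ∀ c : K, f c = 0 → f (Function.invFun g c) = 0 := by
          intro c hc
          have h1 : c ∈ g '' {k : K | f k = 0} := by rw [hgker]; exact hc
          obtain ⟨d, hd, rfl⟩ := h1
          rw [Function.leftInverse_invFun hgbij.1]
          exact hd
        have keygen : ∀ g0 : K → K, (∀ x y : K, g0 (x + y) = g0 x + g0 y) →
            (∀ c : K, f c = 0 → f (g0 c) = 0) →
            ∀ k, f (g0 (surjInv hfsurj (f k))) = f (g0 k) := by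
          intro g0 g0add g0ker k
          have hc : f (surjInv hfsurj (f k) - k) = 0 := by
            rw [hfhom.map_sub', surjInv_eq hfsurj, sub_self]
          have he : surjInv hfsurj (f k) = (surjInv hfsurj (f k) - k) + k :=
            (sub_add_cancel _ _).symm
          rw [he, g0add, hfhom.1, g0ker _ hc, zero_add]
        have keyh : ∀ k, f (g (surjInv hfsurj (f k))) = f (g k) :=
          keygen g hghom.1 hgker₁
        have keyh' : ∀ k, f (Function.invFun g (surjInv hfsurj (f k)))
            = f (Function.invFun g k) := keygen _ hg'hom.1 hgker₂
        have hhhom : IsHLRHom SL SL (fun l => f (g (surjInv hfsurj l))) := by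
          refine ⟨?_, ?_, ?_, ?_, ?_⟩
          · intro l₁ l₂
            obtain ⟨k₁, rfl⟩ := hfsurj l₁
            obtain ⟨k₂, rfl⟩ := hfsurj l₂
            show f (g (surjInv hfsurj (f k₁ + f k₂)))
              = f (g (surjInv hfsurj (f k₁))) + f (g (surjInv hfsurj (f k₂)))
            rw [← hfhom.1, keyh, keyh, keyh, hghom.1, hfhom.1]
          · intro a l
            obtain ⟨k, rfl⟩ := hfsurj l
            show f (g (surjInv hfsurj (a • f k))) = a • f (g (surjInv hfsurj (f k)))
            rw [← hfhom.2.1, keyh, keyh, hghom.2.1, hfhom.2.1]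
          · intro l₁ l₂
            obtain ⟨k₁, rfl⟩ := hfsurj l₁
            obtain ⟨k₂, rfl⟩ := hfsurj l₂
            show f (g (surjInv hfsurj (SL.bracket (f k₁) (f k₂))))
              = SL.bracket (f (g (surjInv hfsurj (f k₁)))) (f (g (surjInv hfsurj (f k₂))))
            rw [← hfhom.2.2.1, keyh, keyh, keyh, hghom.2.2.1, hfhom.2.2.1]
          · intro l
            obtain ⟨k, rfl⟩ := hfsurj l
            show f (g (surjInv hfsurj (SL.alpha (f k))))
              = SL.alpha (f (g (surjInv hfsurj (f k))))
            rw [← hfhom.2.2.2.1, keyh, keyh, hghom.2.2.2.1, hfhom.2.2.2.1]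
          · intro l a
            obtain ⟨k, rfl⟩ := hfsurj l
            show SL.rho (f (g (surjInv hfsurj (f k)))) a = SL.rho (f k) a
            rw [keyh, hfhom.2.2.2.2, hghom.2.2.2.2, hfhom.2.2.2.2]
        have hhb : Function.Bijective (fun l => f (g (surjInv hfsurj l))) := by
          rw [Function.bijective_iff_has_inverse]
          refine ⟨fun l => f (Function.invFun g (surjInv hfsurj l)), ?_, ?_⟩
          · intro l
            obtain ⟨k, rfl⟩ := hfsurj l
            show f (Function.invFun g (surjInv hfsurj (f (g (surjInv hfsurj (f k)))))) = f k
            rw [keyh, keyh', Function.leftInverse_invFun hgbij.1]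
          · intro l
            obtain ⟨k, rfl⟩ := hfsurj l
            show f (g (surjInv hfsurj (f (Function.invFun g (surjInv hfsurj (f k)))))) = f k
            rw [keyh', keyh, Function.rightInverse_invFun hgbij.2]
        have hla : LiftableAut φ SL UL P (fun l => f (g (surjInv hfsurj l))) :=
          liftable_of _ g hhhom hhb hghom hgbij keyh
        exact ⟨fun l => f (g (surjInv hfsurj l)), hla, Φuniq _ g hla hghom keyh⟩

end Statement11
end

section
/- Let f: (K, α_K) → (L, α_L) be a homomorphism of hom-Lie-Rinehart algebras over (A, φ). If D_K is an α-derivation of (K, α_K) and D_L is an α-derivation of (L, α_L), both with the same symbol σ_D ∈ Der_φ(A), such that f ∘ D_K = D_L ∘ f, then uce^φ_A(f) ∘ uce^φ_A(D_K) = uce^φ_A(D_L) ∘ uce^φ_A(f). -/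
open TensorProduct Function Set

/-- if `f ∘ D_K = D_L ∘ f` for `α`-derivations with the same symbol, then
`uce^φ_A(f) ∘ uce^φ_A(D_K) = uce^φ_A(D_L) ∘ uce^φ_A(f)`. -/
theorem statement_14
    {R A : Type} [CommRing R] [CommRing A] [Algebra R A] (φ : A →ₐ[R] A)
    {K L : Type}
    [AddCommGroup K] [Module R K] [Module A K] [IsScalarTower R A K]
    [AddCommGroup L] [Module R L] [Module A L] [IsScalarTower R A L]
    (SK : HLR R A φ K) (SL : HLR R A φ L)
    (f : K → L) (hf : IsHLRHom SK SL f)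
    (DK : K → K) (DL : L → L) (σD : A → A)
    (hDK : IsAlphaDeriv φ SK DK σD) (hDL : IsAlphaDeriv φ SL DL σD)
    (hcomm : ∀ x, f (DK x) = DL (f x))
    (UK : HLR R A φ (UCE φ SK)) (hUK : IsUceStructure φ SK UK)
    (UL : HLR R A φ (UCE φ SL)) (hUL : IsUceStructure φ SL UL)
    (F : UCE φ SK → UCE φ SL) (hF : IsUceFunctorMap φ SK SL UK UL f F)
    (DKu : UCE φ SK → UCE φ SK)
    (hDKu : IsAlphaDeriv φ UK DKu σD)
    (hDKuf : ∀ (a : A) (x y : K),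
      DKu (uceMk φ SK a x y) =
        uceMk φ SK (σD a) (SK.alpha x) (SK.alpha y)
          + uceMk φ SK (φ a) (DK x) (SK.alpha y)
          + uceMk φ SK (φ a) (SK.alpha x) (DK y))
    (DLu : UCE φ SL → UCE φ SL)
    (hDLu : IsAlphaDeriv φ UL DLu σD)
    (hDLuf : ∀ (a : A) (x y : L),
      DLu (uceMk φ SL a x y) =
        uceMk φ SL (σD a) (SL.alpha x) (SL.alpha y)
          + uceMk φ SL (φ a) (DL x) (SL.alpha y)
          + uceMk φ SL (φ a) (SL.alpha x) (DL y)) :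
    ∀ ξ : UCE φ SK, F (DKu ξ) = DLu (F ξ) := by
  have Fadd := hF.1.1
  have DKadd := hDKu.1
  have DLadd := hDLu.1
  have F0 : F 0 = 0 := by
    have h := Fadd 0 0; rw [add_zero] at h; exact (left_eq_add.mp h)
  have DK0 : DKu 0 = 0 := by
    have h := DKadd 0 0; rw [add_zero] at h; exact (left_eq_add.mp h)
  have DL0 : DLu 0 = 0 := by
    have h := DLadd 0 0; rw [add_zero] at h; exact (left_eq_add.mp h)
  have key : ∀ (a : A) (x y : K),
      F (DKu (uceMk φ SK a x y)) = DLu (F (uceMk φ SK a x y)) := by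
    intro a x y
    rw [hDKuf, Fadd, Fadd, hF.2, hF.2, hF.2, hF.2, hDLuf,
      hf.2.2.2.1, hf.2.2.2.1, hcomm, hcomm]
  have step : ∀ ξ η : UCE φ SK, F (DKu ξ) = DLu (F ξ) → F (DKu η) = DLu (F η) →
      F (DKu (ξ + η)) = DLu (F (ξ + η)) := by
    intro ξ η h1 h2
    rw [DKadd, Fadd, h1, h2, Fadd, DLadd]
  intro ξ
  obtain ⟨t, rfl⟩ := Submodule.Quotient.mk_surjective _ ξ
  induction t using TensorProduct.induction_on with
  | zero => rw [Submodule.Quotient.mk_zero, DK0, F0, DL0]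
  | add t1 t2 ih1 ih2 =>
    rw [Submodule.Quotient.mk_add]
    exact step _ _ ih1 ih2
  | tmul a s =>
    induction s using TensorProduct.induction_on with
    | zero =>
      rw [TensorProduct.tmul_zero, Submodule.Quotient.mk_zero, DK0, F0, DL0]
    | add s1 s2 ih1 ih2 =>
      rw [TensorProduct.tmul_add, Submodule.Quotient.mk_add]
      exact step _ _ ih1 ih2
    | tmul x y => exact key a x y
end
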